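/- Under the construction setup with 2 ≤ r ≤ 𝔫, set δ := 𝔫 − r + 1 and let C be the evaluation code on Z_f ⊕ Z_g of the F-subspace { w ∈ span_F(B_{r²}) : deg(w) ≤ (2r−3)·𝔫 }. Then C has dimension r² − 1 and minimum distance exactly δ(δ+1). -/

import Mathlib

open Polynomial
open scoped Classical

/-- The point set `Z_f ⊕ Z_g = {β + γ : β ∈ Z_f, γ ∈ Z_g}`. -/
noncomputable def rootSumSet {F : Type*} [Field F] (f g : F[X]) : Finset F :=
  (f.roots.toFinset ×ˢ g.roots.toFinset).image fun p => p.1 + p.2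

/-- The set `B_{r²} = {g^i f^j : 0 ≤ i, j ≤ r-1}` of polynomials. -/
def Bset {F : Type*} [Field F] (f g : F[X]) (r : ℕ) : Set F[X] :=
  {w | ∃ i j : ℕ, i < r ∧ j < r ∧ w = g ^ i * f ^ j}

/-- The linear evaluation map `F[X] → (S → F)` on a finite set `S` of points. -/
noncomputable def evalOn {F : Type*} [Field F] (S : Finset F) : F[X] →ₗ[F] (↥S → F) :=
  LinearMap.pi fun α => Polynomial.leval (α : F)

lemma auxPoly_coeff {F : Type*} [Field F] {r : ℕ} (d : Fin r → F) (k : ℕ) :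
    (∑ i : Fin r, C (d i) * X ^ (i : ℕ)).coeff k = if hk : k < r then d ⟨k, hk⟩ else 0 := by
  rw [finset_sum_coeff]
  simp only [coeff_C_mul, coeff_X_pow]
  split
  · next hk =>
      rw [Finset.sum_eq_single (⟨k, hk⟩ : Fin r)]
      · simp
      · intro i _ hi
        rw [if_neg, mul_zero]
        intro h; exact hi (Fin.ext h.symm)
      · simp
  · next hk =>
      apply Finset.sum_eq_zero; intro i _
      rw [if_neg, mul_zero]
      intro h; exact hk (h ▸ i.isLt)

lemma auxPoly_eval {F : Type*} [Field F] {r : ℕ} (d : Fin r → F) (x : F) :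
    (∑ i : Fin r, C (d i) * X ^ (i : ℕ)).eval x = ∑ i : Fin r, d i * x ^ (i : ℕ) := by
  rw [eval_finset_sum]; simp

lemma auxPoly_natDegree_le {F : Type*} [Field F] {r : ℕ} (d : Fin r → F) (a : ℕ)
    (h : ∀ i : Fin r, a < (i : ℕ) → d i = 0) :
    (∑ i : Fin r, C (d i) * X ^ (i : ℕ)).natDegree ≤ a := by
  rw [natDegree_le_iff_coeff_eq_zero]
  intro m hm
  rw [auxPoly_coeff]
  split
  · next hk => exact h _ hm
  · rfl

/-- number of nonzero evaluations of a low-degree nonzero polynomial on a finset -/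
lemma auxPoly_count {F : Type*} [Field F] (Z : Finset F) (P : F[X]) (a : ℕ)
    (hP : P ≠ 0) (hd : P.natDegree ≤ a) :
    Z.card - a ≤ (Z.filter fun x => P.eval x ≠ 0).card := by
  have hsub : Z.filter (fun x => P.eval x = 0) ⊆ P.roots.toFinset := by
    intro x hx
    rw [Multiset.mem_toFinset, mem_roots']
    exact ⟨hP, (Finset.mem_filter.mp hx).2⟩
  have h1 : (Z.filter fun x => P.eval x = 0).card ≤ a :=
    le_trans (Finset.card_le_card hsub)
      (le_trans (Multiset.toFinset_card_le _) (le_trans (P.card_roots' ) hd))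
  have h2 := Finset.card_filter_add_card_filter_not (s := Z)
    (p := fun x => P.eval x = 0)
  have h3 : (Z.filter fun x => P.eval x ≠ 0) = (Z.filter fun x => ¬ P.eval x = 0) := rfl
  rw [h3]
  omega

lemma weight_lb {F : Type*} [Field F] {r : ℕ} (Zf Zg : Finset F)
    (c : Fin r × Fin r → F) (b : Fin r) (a : ℕ)
    (hcol : ∀ i : Fin r, a < (i : ℕ) → c (i, b) = 0)
    (hb : ∀ i j : Fin r, (b : ℕ) < (j : ℕ) → c (i, j) = 0)
    (hT : ∃ i : Fin r, c (i, b) ≠ 0) :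
    (Zf.card - a) * (Zg.card - (b : ℕ)) ≤
      ((Zf ×ˢ Zg).filter fun q : F × F =>
        (∑ ij : Fin r × Fin r, c ij * q.1 ^ (ij.1 : ℕ) * q.2 ^ (ij.2 : ℕ)) ≠ 0).card := by
  classical
  set T : F[X] := ∑ i : Fin r, C (c (i, b)) * X ^ (i : ℕ) with hTdef
  obtain ⟨i0, hi0⟩ := hT
  have hTne : T ≠ 0 := by
    intro h
    have := auxPoly_coeff (fun i : Fin r => c (i, b)) (i0 : ℕ)
    rw [← hTdef, h] at this
    simp [i0.isLt] at this
    exact hi0 this.symm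
  have hTdeg : T.natDegree ≤ a := auxPoly_natDegree_le _ a hcol
  set Good := Zf.filter (fun β => T.eval β ≠ 0) with hGood
  have hGoodcard : Zf.card - a ≤ Good.card := auxPoly_count Zf T a hTne hTdeg
  have key : ∀ β ∈ Good, Zg.card - (b : ℕ) ≤
      (Zg.filter fun γ => (∑ ij : Fin r × Fin r,
        c ij * β ^ (ij.1 : ℕ) * γ ^ (ij.2 : ℕ)) ≠ 0).card := by
    intro β hβ
    set P : F[X] := ∑ j : Fin r, C (∑ i : Fin r, c (i, j) * β ^ (i : ℕ)) * X ^ (j : ℕ) with hPdef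
    have hPevalγ : ∀ γ : F, P.eval γ = ∑ ij : Fin r × Fin r,
        c ij * β ^ (ij.1 : ℕ) * γ ^ (ij.2 : ℕ) := by
      intro γ
      rw [hPdef, auxPoly_eval, Fintype.sum_prod_type_right]
      apply Finset.sum_congr rfl
      intro j _
      rw [Finset.sum_mul]
    have hPcoeffb : P.coeff (b : ℕ) = T.eval β := by
      rw [hPdef, auxPoly_coeff, dif_pos b.isLt, hTdef, auxPoly_eval]
    have hβne := (Finset.mem_filter.mp hβ).2
    have hPne : P ≠ 0 := by
      intro h
      rw [h, coeff_zero] at hPcoeffb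
      exact hβne hPcoeffb.symm
    have hPdeg : P.natDegree ≤ (b : ℕ) := by
      apply auxPoly_natDegree_le
      intro j hj
      apply Finset.sum_eq_zero
      intro i _
      rw [hb i j hj, zero_mul]
    have := auxPoly_count Zg P (b : ℕ) hPne hPdeg
    refine le_trans this (Finset.card_le_card ?_)
    intro γ hγ
    rw [Finset.mem_filter] at hγ ⊢
    exact ⟨hγ.1, by rw [← hPevalγ]; exact hγ.2⟩
  rw [Finset.card_filter, Finset.sum_product]
  calc (Zf.card - a) * (Zg.card - (b : ℕ))
      ≤ Good.card * (Zg.card - (b : ℕ)) := Nat.mul_le_mul_right _ hGoodcard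
    _ = ∑ _β ∈ Good, (Zg.card - (b : ℕ)) := by rw [Finset.sum_const, smul_eq_mul]
    _ ≤ ∑ β ∈ Good, ∑ γ ∈ Zg, if (∑ ij : Fin r × Fin r,
          c ij * β ^ (ij.1 : ℕ) * γ ^ (ij.2 : ℕ)) ≠ 0 then 1 else 0 := by
        apply Finset.sum_le_sum
        intro β hβ
        rw [← Finset.card_filter]
        exact key β hβ
    _ ≤ ∑ β ∈ Zf, ∑ γ ∈ Zg, if (∑ ij : Fin r × Fin r,
          c ij * β ^ (ij.1 : ℕ) * γ ^ (ij.2 : ℕ)) ≠ 0 then 1 else 0 := by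
        apply Finset.sum_le_sum_of_subset (Finset.filter_subset _ _)

lemma grid_vanish {F : Type*} [Field F] {r : ℕ} (Zf Zg : Finset F)
    (hfc : r ≤ Zf.card) (hgc : r ≤ Zg.card)
    (c : Fin r × Fin r → F)
    (h : ∀ β ∈ Zf, ∀ γ ∈ Zg,
      (∑ ij : Fin r × Fin r, c ij * β ^ (ij.1 : ℕ) * γ ^ (ij.2 : ℕ)) = 0) :
    c = 0 := by
  classical
  rcases Nat.eq_zero_or_pos r with hr0 | hr0
  · funext ij; exact absurd ij.1.isLt (by omega)
  have step1 : ∀ β ∈ Zf, ∀ j : Fin r, ∑ i : Fin r, c (i, j) * β ^ (i : ℕ) = 0 := by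
    intro β hβ j
    set P : F[X] := ∑ j : Fin r, C (∑ i : Fin r, c (i, j) * β ^ (i : ℕ)) * X ^ (j : ℕ)
      with hPdef
    have hPeval : ∀ γ ∈ Zg, P.eval γ = 0 := by
      intro γ hγ
      rw [hPdef, auxPoly_eval]
      rw [← h β hβ γ hγ, Fintype.sum_prod_type_right]
      apply Finset.sum_congr rfl
      intro j' _
      rw [Finset.sum_mul]
    have hPz : P = 0 := by
      apply eq_zero_of_natDegree_lt_card_of_eval_eq_zero' P Zg hPeval
      calc P.natDegree ≤ r - 1 := by
            rw [hPdef]; exact auxPoly_natDegree_le _ _ (fun i hi => absurd i.isLt (by omega))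
        _ < Zg.card := by omega
    have hPz' : P.coeff (j : ℕ) = 0 := by rw [hPz, coeff_zero]
    rw [hPdef, auxPoly_coeff, dif_pos j.isLt] at hPz'
    simpa using hPz'
  funext ij
  obtain ⟨i, j⟩ := ij
  set Q : F[X] := ∑ i : Fin r, C (c (i, j)) * X ^ (i : ℕ) with hQdef
  have hQz : Q = 0 := by
    apply eq_zero_of_natDegree_lt_card_of_eval_eq_zero' Q Zf
    · intro β hβ
      rw [hQdef, auxPoly_eval]
      exact step1 β hβ j
    · calc Q.natDegree ≤ r - 1 := by
            rw [hQdef]; exact auxPoly_natDegree_le _ _ (fun i hi => absurd i.isLt (by omega))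
        _ < Zf.card := by omega
  have hQz' : Q.coeff (i : ℕ) = 0 := by rw [hQz, coeff_zero]
  rw [hQdef, auxPoly_coeff, dif_pos i.isLt] at hQz'
  simpa using hQz'

theorem stmt_12 (p e : ℕ) (hp : p.Prime) (he : 0 < e)
    (F : Type*) [Field F] [Fintype F] [CharP F p]
    (f : F[X])
    (hflin : ∀ m ∈ f.support, ∃ i : ℕ, m = (p ^ e) ^ i)
    (hdeg : 1 < f.natDegree)
    (ha0 : f.coeff 1 ≠ 0) (ha1 : f.coeff 1 ≠ 1)
    (g : F[X]) (hg : g = X - f)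
    (hfs : (f.map (RingHom.id F)).Splits) (hgs : (g.map (RingHom.id F)).Splits)
    (r : ℕ) (hr : 2 ≤ r) (hrn : r ≤ f.natDegree)
    (C : Submodule F (↥(rootSumSet f g) → F))
    (hC : C = Submodule.map (evalOn (rootSumSet f g))
      (Submodule.span F (Bset f g r) ⊓
        Polynomial.degreeLE F (((2 * r - 3) * f.natDegree : ℕ) : WithBot ℕ))) :
    Module.finrank F ↥C = r ^ 2 - 1 ∧
    IsLeast {w : ℕ | ∃ v ∈ C, v ≠ 0 ∧
        (Finset.univ.filter fun α : ↥(rootSumSet f g) => v α ≠ 0).card = w}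
      ((f.natDegree - r + 1) * (f.natDegree - r + 1 + 1)) := by
  have hpfact : Fact p.Prime := ⟨hp⟩
  have hfne : f ≠ 0 := fun h => by rw [h, natDegree_zero] at hdeg; omega
  set n := f.natDegree with hn
  have hgdeg : g.natDegree = n := by
    rw [hg, ← neg_sub, natDegree_neg, natDegree_sub_eq_left_of_natDegree_lt]
    rw [natDegree_X]; exact hdeg
  have hgne : g ≠ 0 := fun h => by rw [h, natDegree_zero] at hgdeg; omega
  have hcoeffzero : ∀ m : ℕ, m ≠ 0 → m ≠ 1 → (m : F) ≠ 0 → f.coeff m = 0 := by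
    intro m hm0 hm1 hmF
    by_contra hc
    obtain ⟨i, hi⟩ := hflin m (mem_support_iff.mpr hc)
    rcases Nat.eq_zero_or_pos i with h0 | h0
    · simp [h0] at hi; omega
    · apply hmF
      rw [hi, ← pow_mul]
      have : p ∣ p ^ (e * i) := dvd_pow_self p (by positivity)
      exact_mod_cast (CharP.cast_eq_zero_iff F p _).mpr this
  have hderf : derivative f = (Polynomial.C (f.coeff 1)) := by
    ext k
    rw [coeff_derivative, coeff_C]
    rcases Nat.eq_zero_or_pos k with h0 | h0
    · simp [h0]
    · rw [if_neg (by omega)]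
      rcases eq_or_ne ((k + 1 : ℕ) : F) 0 with hF | hF
      · push_cast at hF ⊢
        rw [hF, mul_zero]
      · rw [hcoeffzero (k+1) (by omega) (by omega) hF, zero_mul]
  have hderg : derivative g = (Polynomial.C (1 - f.coeff 1)) := by
    rw [hg, derivative_sub, derivative_X, hderf, map_sub, C_1]
  have hfsep : f.Separable := by
    refine ⟨0, Polynomial.C (f.coeff 1)⁻¹, ?_⟩
    rw [hderf, zero_mul, zero_add, ← C_mul, inv_mul_cancel₀ ha0, C_1]
  have hgsep : g.Separable := by
    refine ⟨0, Polynomial.C (1 - f.coeff 1)⁻¹, ?_⟩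
    rw [hderg, zero_mul, zero_add, ← C_mul, inv_mul_cancel₀ (by
      intro h; apply ha1; rw [sub_eq_zero] at h; exact h.symm), C_1]
  set Zf := f.roots.toFinset with hZf
  set Zg := g.roots.toFinset with hZg
  have hZfcard : Zf.card = n := by
    rw [hZf, Multiset.toFinset_card_of_nodup (nodup_roots hfsep),
      splits_iff_card_roots.mp (by simpa using hfs)]
  have hZgcard : Zg.card = n := by
    rw [hZg, Multiset.toFinset_card_of_nodup (nodup_roots hgsep),
      splits_iff_card_roots.mp (by simpa using hgs), hgdeg]
  have hfadd : ∀ x y : F, f.eval (x + y) = f.eval x + f.eval y := by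
    intro x y
    rw [eval_eq_sum, eval_eq_sum, eval_eq_sum, Polynomial.sum_def, Polynomial.sum_def,
      Polynomial.sum_def, ← Finset.sum_add_distrib]
    apply Finset.sum_congr rfl
    intro m hm
    obtain ⟨i, hi⟩ := hflin m hm
    rw [hi, ← pow_mul, add_pow_char_pow, mul_add]
  have hsum : ∀ α : F, g.eval α + f.eval α = α := by
    intro α
    rw [hg]; simp
  have hrootf : ∀ β ∈ Zf, f.eval β = 0 := by
    intro β hβ
    rw [hZf, Multiset.mem_toFinset, mem_roots'] at hβ
    exact hβ.2
  have hrootg : ∀ γ ∈ Zg, f.eval γ = γ := by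
    intro γ hγ
    rw [hZg, Multiset.mem_toFinset, mem_roots'] at hγ
    have := hγ.2
    rw [IsRoot.def, hg, eval_sub, eval_X, sub_eq_zero] at this
    exact this.symm
  have hkey : ∀ β ∈ Zf, ∀ γ ∈ Zg, f.eval (β + γ) = γ ∧ g.eval (β + γ) = β := by
    intro β hβ γ hγ
    have h1 : f.eval (β + γ) = γ := by rw [hfadd, hrootf β hβ, hrootg γ hγ, zero_add]
    refine ⟨h1, ?_⟩
    have h2 := hsum (β + γ)
    rw [h1] at h2
    exact add_right_cancel h2
  have hmemS : ∀ α : F, α ∈ rootSumSet f g ↔ ∃ β ∈ Zf, ∃ γ ∈ Zg, β + γ = α := by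
    intro α
    rw [rootSumSet, Finset.mem_image]
    constructor
    · rintro ⟨q, hq, rfl⟩
      rw [Finset.mem_product] at hq
      exact ⟨q.1, hq.1, q.2, hq.2, rfl⟩
    · rintro ⟨β, hβ, γ, hγ, rfl⟩
      exact ⟨(β, γ), Finset.mem_product.mpr ⟨hβ, hγ⟩, rfl⟩
  have hSdecomp : ∀ α ∈ rootSumSet f g, g.eval α ∈ Zf ∧ f.eval α ∈ Zg := by
    intro α hα
    obtain ⟨β, hβ, γ, hγ, rfl⟩ := (hmemS α).mp hα
    obtain ⟨h1, h2⟩ := hkey β hβ γ hγ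
    rw [h1, h2]
    exact ⟨hβ, hγ⟩
  
  have hr1 : r - 1 < r := by omega
  set top : Fin r × Fin r := (⟨r - 1, hr1⟩, ⟨r - 1, hr1⟩) with htop
  set v : Fin r × Fin r → F[X] := fun ij => g ^ (ij.1 : ℕ) * f ^ (ij.2 : ℕ) with hv
  set u : Fin r × Fin r → (↥(rootSumSet f g) → F) :=
    fun ij α => (g.eval (α : F)) ^ (ij.1 : ℕ) * (f.eval (α : F)) ^ (ij.2 : ℕ) with hu
  have hevalv : ∀ ij, evalOn (rootSumSet f g) (v ij) = u ij := by
    intro ij; funext α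
    simp [evalOn, hv, hu, leval]
  have hvne : ∀ ij : Fin r × Fin r, v ij ≠ 0 := by
    intro ij
    exact mul_ne_zero (pow_ne_zero _ hgne) (pow_ne_zero _ hfne)
  have hdegv : ∀ ij : Fin r × Fin r, (v ij).natDegree = ((ij.1 : ℕ) + (ij.2 : ℕ)) * n := by
    intro ij
    rw [hv]
    simp only []
    rw [natDegree_mul (pow_ne_zero _ hgne) (pow_ne_zero _ hfne), natDegree_pow, natDegree_pow,
      hgdeg, ← hn, add_mul]
  have hBset : Bset f g r = Set.range v := by
    ext w
    constructor
    · rintro ⟨i, j, hi, hj, rfl⟩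
      exact ⟨(⟨i, hi⟩, ⟨j, hj⟩), rfl⟩
    · rintro ⟨ij, rfl⟩
      exact ⟨ij.1, ij.2, ij.1.isLt, ij.2.isLt, rfl⟩
  have hnetop : ∀ ij : Fin r × Fin r, ij ≠ top → (ij.1 : ℕ) + (ij.2 : ℕ) ≤ 2 * r - 3 := by
    intro ij hij
    have h1 : (ij.1 : ℕ) < r := ij.1.isLt
    have h2 : (ij.2 : ℕ) < r := ij.2.isLt
    have : (ij.1 : ℕ) ≠ r - 1 ∨ (ij.2 : ℕ) ≠ r - 1 := by
      by_contra hcon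
      push_neg at hcon
      exact hij (Prod.ext (Fin.ext hcon.1) (Fin.ext hcon.2))
    omega
  have hVeq : Submodule.span F (Bset f g r) ⊓
      Polynomial.degreeLE F (((2 * r - 3) * n : ℕ) : WithBot ℕ) =
      Submodule.span F (Set.range fun x : {x : Fin r × Fin r // x ≠ top} => v x.1) := by
    apply le_antisymm
    · intro w hw
      obtain ⟨hw1, hw2⟩ := Submodule.mem_inf.mp hw
      rw [Polynomial.mem_degreeLE] at hw2
      rw [hBset, Submodule.mem_span_range_iff_exists_fun] at hw1
      obtain ⟨c, hc⟩ := hw1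
      have hctop : c top = 0 := by
        have hcoeffw : w.coeff ((2 * r - 2) * n) = 0 := by
          apply coeff_eq_zero_of_degree_lt
          apply lt_of_le_of_lt hw2
          exact_mod_cast Nat.cast_lt.mpr ((Nat.mul_lt_mul_right (by omega : 0 < n)).mpr (by omega))
        have hsum2 : w.coeff ((2 * r - 2) * n) =
            ∑ ij : Fin r × Fin r, c ij * (v ij).coeff ((2 * r - 2) * n) := by
          rw [← hc, finset_sum_coeff]
          apply Finset.sum_congr rfl
          intro ij _
          rw [coeff_smul, smul_eq_mul]
        rw [Finset.sum_eq_single top] at hsum2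
        · have hvtop : (v top).coeff ((2 * r - 2) * n) = (v top).leadingCoeff := by
            unfold Polynomial.leadingCoeff
            congr 1
            rw [hdegv top, htop]
            simp only []
            congr 1
            omega
          rw [hvtop, hcoeffw] at hsum2
          have hlc : (v top).leadingCoeff ≠ 0 := leadingCoeff_ne_zero.mpr (hvne top)
          exact (mul_eq_zero.mp hsum2.symm).resolve_right hlc
        · intro ij _ hij
          rw [coeff_eq_zero_of_natDegree_lt, mul_zero]
          rw [hdegv ij]
          exact (Nat.mul_lt_mul_right (by omega : 0 < n)).mpr (by have := hnetop ij hij; omega)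
        · intro h
          exact absurd (Finset.mem_univ top) h
      rw [← hc]
      apply Submodule.sum_mem
      intro ij _
      by_cases hij : ij = top
      · rw [hij, hctop, zero_smul]
        exact Submodule.zero_mem _
      · exact Submodule.smul_mem _ _ (Submodule.subset_span ⟨⟨ij, hij⟩, rfl⟩)
    · rw [Submodule.span_le]
      rintro w ⟨x, rfl⟩
      constructor
      · exact Submodule.subset_span (hBset ▸ Set.mem_range_self x.1)
      · rw [SetLike.mem_coe, Polynomial.mem_degreeLE]
        apply le_trans (degree_le_natDegree)
        rw [hdegv x.1]
        exact_mod_cast Nat.cast_le.mpr (Nat.mul_le_mul_right n (hnetop x.1 x.2))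
  have hCspan : C = Submodule.span F
      (Set.range fun x : {x : Fin r × Fin r // x ≠ top} => u x.1) := by
    rw [hC, hVeq, Submodule.map_span, ← Set.range_comp]
    congr 1
    apply congrArg
    funext x
    exact hevalv x.1
  
  have husezero : ∀ c : Fin r × Fin r → F, (∑ ij : Fin r × Fin r, c ij • u ij) = 0 → c = 0 := by
    intro c hc
    apply grid_vanish Zf Zg (by omega) (by omega) c
    intro β hβ γ hγ
    have hmem : β + γ ∈ rootSumSet f g := (hmemS _).mpr ⟨β, hβ, γ, hγ, rfl⟩
    have h0 := congrFun hc ⟨β + γ, hmem⟩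
    rw [Finset.sum_apply] at h0
    calc ∑ ij : Fin r × Fin r, c ij * β ^ (ij.1 : ℕ) * γ ^ (ij.2 : ℕ)
        = ∑ ij : Fin r × Fin r, (c ij • u ij) ⟨β + γ, hmem⟩ := by
          apply Finset.sum_congr rfl
          intro ij _
          rw [hu]
          simp only [Pi.smul_apply, smul_eq_mul]
          rw [(hkey β hβ γ hγ).1, (hkey β hβ γ hγ).2, mul_assoc]
      _ = 0 := by simpa using h0
  have hu_li : LinearIndependent F u := by
    rw [Fintype.linearIndependent_iff]
    intro c hc i
    rw [husezero c hc]
    rfl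
  have hu_li' : LinearIndependent F (fun x : {x : Fin r × Fin r // x ≠ top} => u x.1) :=
    hu_li.comp _ Subtype.val_injective
  have hdim : Module.finrank F ↥C = r ^ 2 - 1 := by
    rw [hCspan, finrank_span_eq_card hu_li']
    have h1 : Fintype.card {x : Fin r × Fin r // x ≠ top} =
        Fintype.card (Fin r × Fin r) - Fintype.card {x : Fin r × Fin r // x = top} :=
      Fintype.card_subtype_compl _
    rw [h1, Fintype.card_subtype_eq, Fintype.card_prod, Fintype.card_fin, pow_two]
  have htransfer : ∀ φ : F → F,
      (Finset.univ.filter fun α : ↥(rootSumSet f g) => φ (α : F) ≠ 0).card =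
      ((Zf ×ˢ Zg).filter fun q : F × F => φ (q.1 + q.2) ≠ 0).card := by
    intro φ
    apply Finset.card_bij (fun (α : ↥(rootSumSet f g)) _ => ((g.eval (α : F)), (f.eval (α : F))))
    · intro α hα
      rw [Finset.mem_filter] at hα ⊢
      refine ⟨Finset.mem_product.mpr ⟨(hSdecomp _ α.2).1, (hSdecomp _ α.2).2⟩, ?_⟩
      rw [hsum (α : F)]
      exact hα.2
    · intro α₁ _ α₂ _ h
      have h1 := congrArg Prod.fst h
      have h2 := congrArg Prod.snd h
      simp only [] at h1 h2
      apply Subtype.ext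
      rw [← hsum (α₁ : F), ← hsum (α₂ : F), h1, h2]
    · intro q hq
      rw [Finset.mem_filter, Finset.mem_product] at hq
      obtain ⟨⟨hq1, hq2⟩, hqv⟩ := hq
      have hmem : q.1 + q.2 ∈ rootSumSet f g := (hmemS _).mpr ⟨q.1, hq1, q.2, hq2, rfl⟩
      refine ⟨⟨q.1 + q.2, hmem⟩, Finset.mem_filter.mpr ⟨Finset.mem_univ _, hqv⟩, ?_⟩
      obtain ⟨h1, h2⟩ := hkey q.1 hq1 q.2 hq2
      have : ((g.eval (q.1 + q.2)), (f.eval (q.1 + q.2))) = (q.1, q.2) := by rw [h1, h2]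
      simpa using this
  
  have hlow : ∀ w : ℕ, (∃ v0 ∈ C, v0 ≠ 0 ∧
      (Finset.univ.filter fun α : ↥(rootSumSet f g) => v0 α ≠ 0).card = w) →
      (n - r + 1) * (n - r + 1 + 1) ≤ w := by
    rintro w ⟨v0, hv0C, hv0ne, hwcard⟩
    rw [hCspan, Submodule.mem_span_range_iff_exists_fun] at hv0C
    obtain ⟨c, hc⟩ := hv0C
    set cc : Fin r × Fin r → F := fun ij => if h : ij = top then 0 else c ⟨ij, h⟩ with hcc
    have hcctop : cc top = 0 := by rw [hcc]; simp
    have hrep : ∑ ij : Fin r × Fin r, cc ij • u ij = v0 := by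
      rw [← hc]
      rw [← Finset.sum_erase Finset.univ (by rw [hcctop, zero_smul])]
      rw [Finset.sum_subtype (p := fun x => x ≠ top) (Finset.univ.erase top) (by simp)]
      apply Finset.sum_congr rfl
      intro x _
      rw [hcc]
      simp only []
      rw [dif_neg x.2]
    have hccnz : ∃ ij : Fin r × Fin r, cc ij ≠ 0 := by
      by_contra hcon
      push_neg at hcon
      apply hv0ne
      rw [← hrep]
      apply Finset.sum_eq_zero
      intro ij _
      rw [hcon ij, zero_smul]
    have hv0eval : ∀ α : ↥(rootSumSet f g), v0 α = ∑ ij : Fin r × Fin r,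
        cc ij * (g.eval (α : F)) ^ (ij.1 : ℕ) * (f.eval (α : F)) ^ (ij.2 : ℕ) := by
      intro α
      rw [← hrep, Finset.sum_apply]
      apply Finset.sum_congr rfl
      intro ij _
      rw [hu]
      simp only [Pi.smul_apply, smul_eq_mul]
      ring
    have hwt : w = ((Zf ×ˢ Zg).filter fun q : F × F =>
        (∑ ij : Fin r × Fin r, cc ij * q.1 ^ (ij.1 : ℕ) * q.2 ^ (ij.2 : ℕ)) ≠ 0).card := by
      rw [← hwcard]
      have e1 : (Finset.univ.filter fun α : ↥(rootSumSet f g) => v0 α ≠ 0) =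
          (Finset.univ.filter fun α : ↥(rootSumSet f g) =>
            (∑ ij : Fin r × Fin r, cc ij * (g.eval (α : F)) ^ (ij.1 : ℕ)
              * (f.eval (α : F)) ^ (ij.2 : ℕ)) ≠ 0) := by
        apply Finset.filter_congr
        intro α _
        rw [hv0eval α]
      rw [e1, htransfer (fun x : F => ∑ ij : Fin r × Fin r,
        cc ij * (g.eval x) ^ (ij.1 : ℕ) * (f.eval x) ^ (ij.2 : ℕ))]
      apply congrArg
      apply Finset.filter_congr
      intro q hq
      rw [Finset.mem_product] at hq
      obtain ⟨k1, k2⟩ := hkey q.1 hq.1 q.2 hq.2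
      rw [k1, k2]
    obtain ⟨ij0, hij0⟩ := hccnz
    set J : Finset (Fin r) := Finset.univ.filter (fun j => ∃ i, cc (i, j) ≠ 0) with hJ
    have hJne : J.Nonempty := by
      refine ⟨ij0.2, ?_⟩
      rw [hJ, Finset.mem_filter]
      exact ⟨Finset.mem_univ _, ⟨ij0.1, by simpa using hij0⟩⟩
    set b : Fin r := J.max' hJne with hbdef
    have hbJ : b ∈ J := J.max'_mem hJne
    have hbmax : ∀ i j : Fin r, (b : ℕ) < (j : ℕ) → cc (i, j) = 0 := by
      intro i j hj
      by_contra hcon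
      have hjJ : j ∈ J := by
        rw [hJ, Finset.mem_filter]
        exact ⟨Finset.mem_univ _, ⟨i, hcon⟩⟩
      have := J.le_max' j hjJ
      rw [← hbdef, Fin.le_def] at this
      omega
    have hbT : ∃ i, cc (i, b) ≠ 0 := by
      rw [hJ, Finset.mem_filter] at hbJ
      exact hbJ.2
    rcases eq_or_ne ((b : ℕ)) (r - 1) with hcase | hcase
    · have hcol : ∀ i : Fin r, (r - 2 : ℕ) < (i : ℕ) → cc (i, b) = 0 := by
        intro i hi
        have hieq : (i : ℕ) = r - 1 := by have := i.isLt; omega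
        have heq : (i, b) = top := by
          rw [htop]
          exact Prod.ext (Fin.ext (by simpa using hieq)) (Fin.ext (by simpa using hcase))
        rw [heq, hcctop]
      have hwl := weight_lb Zf Zg cc b (r - 2) hcol hbmax hbT
      rw [hwt]
      refine le_trans ?_ hwl
      rw [hZfcard, hZgcard, hcase]
      have e1 : n - (r - 2) = n - r + 2 := by omega
      have e2 : n - (r - 1) = n - r + 1 := by omega
      have e3 : n - r + 1 + 1 = n - r + 2 := by omega
      rw [e1, e2, e3, Nat.mul_comm]
    · have hcol : ∀ i : Fin r, (r - 1 : ℕ) < (i : ℕ) → cc (i, b) = 0 := by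
        intro i hi
        exact absurd i.isLt (by omega)
      have hwl := weight_lb Zf Zg cc b (r - 1) hcol hbmax hbT
      rw [hwt]
      refine le_trans ?_ hwl
      rw [hZfcard, hZgcard]
      have e2 : n - (r - 1) = n - r + 1 := by omega
      rw [e2]
      have hble : (b : ℕ) ≤ r - 2 := by have := b.isLt; omega
      exact Nat.mul_le_mul (le_refl _) (by omega)
  -- existence of a minimum-weight codeword
  obtain ⟨T, hTsub, hTcard⟩ := Finset.exists_subset_card_eq (s := Zf) (n := r - 1) (by omega)
  obtain ⟨U, hUsub, hUcard⟩ := Finset.exists_subset_card_eq (s := Zg) (n := r - 2) (by omega)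
  set W : F[X] := (∏ t ∈ T, (g - Polynomial.C t)) * (∏ s ∈ U, (f - Polynomial.C s)) with hW
  have hWeval : ∀ x : F, W.eval x = (∏ t ∈ T, (g.eval x - t)) * (∏ s ∈ U, (f.eval x - s)) := by
    intro x
    rw [hW, eval_mul, eval_prod, eval_prod]
    simp [eval_sub]
  have hWspan : W ∈ Submodule.span F (Bset f g r) := by
    have hP1 : (∏ t ∈ T, (g - Polynomial.C t)) = (∏ t ∈ T, (X - Polynomial.C t)).comp g := by
      rw [prod_comp]
      apply Finset.prod_congr rfl
      intro t _
      rw [sub_comp, X_comp, C_comp]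
    have hP2 : (∏ s ∈ U, (f - Polynomial.C s)) = (∏ s ∈ U, (X - Polynomial.C s)).comp f := by
      rw [prod_comp]
      apply Finset.prod_congr rfl
      intro t _
      rw [sub_comp, X_comp, C_comp]
    set P1 := ∏ t ∈ T, (X - Polynomial.C t) with hP1d
    set P2 := ∏ s ∈ U, (X - Polynomial.C s) with hP2d
    have hd1 : P1.natDegree = r - 1 := by
      rw [hP1d, natDegree_prod _ _ (fun t _ => X_sub_C_ne_zero t),
        Finset.sum_congr rfl (fun t _ => natDegree_X_sub_C t), Finset.sum_const,
        smul_eq_mul, mul_one, hTcard]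
    have hd2 : P2.natDegree = r - 2 := by
      rw [hP2d, natDegree_prod _ _ (fun t _ => X_sub_C_ne_zero t),
        Finset.sum_congr rfl (fun t _ => natDegree_X_sub_C t), Finset.sum_const,
        smul_eq_mul, mul_one, hUcard]
    rw [hW, hP1, hP2, comp_eq_sum_left, comp_eq_sum_left, Polynomial.sum_def,
      Polynomial.sum_def, Finset.sum_mul_sum]
    apply Submodule.sum_mem
    intro i hi
    apply Submodule.sum_mem
    intro j hj
    have hir : i < r := by
      have := le_natDegree_of_mem_supp i hi
      omega
    have hjr : j < r := by
      have := le_natDegree_of_mem_supp j hj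
      omega
    have hterm : Polynomial.C (P1.coeff i) * g ^ i * (Polynomial.C (P2.coeff j) * f ^ j)
        = (P1.coeff i * P2.coeff j) • (g ^ i * f ^ j) := by
      rw [smul_eq_C_mul, map_mul]
      ring
    rw [hterm]
    exact Submodule.smul_mem _ _ (Submodule.subset_span ⟨i, j, hir, hjr, rfl⟩)
  have hWdeg : W.degree ≤ (((2 * r - 3) * n : ℕ) : WithBot ℕ) := by
    apply le_trans degree_le_natDegree
    rw [Nat.cast_le]
    calc W.natDegree ≤ (∏ t ∈ T, (g - Polynomial.C t)).natDegree
          + (∏ s ∈ U, (f - Polynomial.C s)).natDegree := by rw [hW]; exact natDegree_mul_le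
      _ ≤ (∑ t ∈ T, (g - Polynomial.C t).natDegree)
          + (∑ s ∈ U, (f - Polynomial.C s).natDegree) := add_le_add (natDegree_prod_le _ _) (natDegree_prod_le _ _)
      _ = (∑ _t ∈ T, n) + (∑ _s ∈ U, n) := by
          congr 1
          · apply Finset.sum_congr rfl; intro t _; rw [natDegree_sub_C, hgdeg]
          · apply Finset.sum_congr rfl; intro st _; rw [natDegree_sub_C]
      _ = (r - 1) * n + (r - 2) * n := by
          rw [Finset.sum_const, Finset.sum_const, smul_eq_mul, smul_eq_mul, hTcard, hUcard]
      _ = (2 * r - 3) * n := by rw [← Nat.add_mul]; congr 1; omega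
  set v0 : ↥(rootSumSet f g) → F := evalOn (rootSumSet f g) W with hv0
  have hv0C : v0 ∈ C := by
    rw [hC]
    exact ⟨W, Submodule.mem_inf.mpr ⟨hWspan, Polynomial.mem_degreeLE.mpr hWdeg⟩, rfl⟩
  have hv0val : ∀ α : ↥(rootSumSet f g), v0 α = W.eval (α : F) := by
    intro α
    rw [hv0]
    simp [evalOn, leval]
  have hwW : (Finset.univ.filter fun α : ↥(rootSumSet f g) => v0 α ≠ 0).card =
      (n - r + 1) * (n - r + 1 + 1) := by
    have e0 : (Finset.univ.filter fun α : ↥(rootSumSet f g) => v0 α ≠ 0) =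
        (Finset.univ.filter fun α : ↥(rootSumSet f g) => W.eval (α : F) ≠ 0) := by
      apply Finset.filter_congr
      intro α _
      rw [hv0val α]
    rw [e0, htransfer (fun x : F => W.eval x)]
    have e1 : ((Zf ×ˢ Zg).filter fun q : F × F => W.eval (q.1 + q.2) ≠ 0) =
        (Zf \ T) ×ˢ (Zg \ U) := by
      ext q
      rw [Finset.mem_filter, Finset.mem_product, Finset.mem_product,
        Finset.mem_sdiff, Finset.mem_sdiff]
      constructor
      · rintro ⟨⟨hq1, hq2⟩, hqv⟩
        obtain ⟨k1, k2⟩ := hkey q.1 hq1 q.2 hq2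
        rw [hWeval, k1, k2, mul_ne_zero_iff, Finset.prod_ne_zero_iff,
          Finset.prod_ne_zero_iff] at hqv
        refine ⟨⟨hq1, fun hT' => ?_⟩, ⟨hq2, fun hU' => ?_⟩⟩
        · exact (hqv.1 q.1 hT') (sub_self q.1)
        · exact (hqv.2 q.2 hU') (sub_self q.2)
      · rintro ⟨⟨hq1, hqT⟩, ⟨hq2, hqU⟩⟩
        obtain ⟨k1, k2⟩ := hkey q.1 hq1 q.2 hq2
        refine ⟨⟨hq1, hq2⟩, ?_⟩
        rw [hWeval, k1, k2, mul_ne_zero_iff, Finset.prod_ne_zero_iff, Finset.prod_ne_zero_iff]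
        constructor
        · intro t ht
          rw [sub_ne_zero]
          rintro rfl
          exact hqT ht
        · intro st hst
          rw [sub_ne_zero]
          rintro rfl
          exact hqU hst
    rw [e1, Finset.card_product, Finset.card_sdiff_of_subset hTsub, Finset.card_sdiff_of_subset hUsub,
      hZfcard, hZgcard, hTcard, hUcard]
    have e2 : n - (r - 1) = n - r + 1 := by omega
    have e3 : n - (r - 2) = n - r + 1 + 1 := by omega
    rw [e2, e3]
  have hv0ne : v0 ≠ 0 := by
    have hpos : 0 < (n - r + 1) * (n - r + 1 + 1) := Nat.mul_pos (by omega) (by omega)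
    rw [← hwW] at hpos
    obtain ⟨α, hα⟩ := Finset.card_pos.mp hpos
    intro h
    rw [Finset.mem_filter] at hα
    exact hα.2 (by rw [h]; rfl)
  exact ⟨hdim, ⟨⟨v0, hv0C, hv0ne, hwW⟩, fun w hw => hlow w hw⟩⟩
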